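/- If G is a connected graph, e ∈ E(G), and G−e is connected, then μ_o(G−e) ≥ (1/6)·μ_o(G), where μ_o is the outer mutual-visibility number. -/

import Mathlib

open SimpleGraph

/-- `u` and `v` are `X`-visible in `G`: there is a shortest `u,v`-walk whose
vertices meet `X` only possibly in `u` and `v`. -/
def IsMVisible {V : Type*} (G : SimpleGraph V) (X : Set V) (u v : V) : Prop :=
  ∃ P : G.Walk u v, P.length = G.dist u v ∧
    ∀ w ∈ P.support, w ∈ X → w = u ∨ w = v

/-- mutual-visibility set -/
def IsMVSet {V : Type*} (G : SimpleGraph V) (X : Set V) : Prop :=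
  ∀ u ∈ X, ∀ v ∈ X, IsMVisible G X u v

/-- outer mutual-visibility set -/
def IsOuterMVSet {V : Type*} (G : SimpleGraph V) (X : Set V) : Prop :=
  ∀ u ∈ X, ∀ v : V, IsMVisible G X u v

/-- dual mutual-visibility set -/
def IsDualMVSet {V : Type*} (G : SimpleGraph V) (X : Set V) : Prop :=
  (∀ u ∈ X, ∀ v ∈ X, IsMVisible G X u v) ∧
  (∀ u ∉ X, ∀ v ∉ X, IsMVisible G X u v)

/-- total mutual-visibility set -/
def IsTotalMVSet {V : Type*} (G : SimpleGraph V) (X : Set V) : Prop :=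
  ∀ u v : V, IsMVisible G X u v

/-- the mutual-visibility number μ(G) -/
noncomputable def mu {V : Type*} (G : SimpleGraph V) : ℕ :=
  sSup {n | ∃ X : Set V, IsMVSet G X ∧ X.ncard = n}

/-- the outer mutual-visibility number μₒ(G) -/
noncomputable def muO {V : Type*} (G : SimpleGraph V) : ℕ :=
  sSup {n | ∃ X : Set V, IsOuterMVSet G X ∧ X.ncard = n}

/-- the dual mutual-visibility number μ_d(G) -/
noncomputable def muD {V : Type*} (G : SimpleGraph V) : ℕ :=
  sSup {n | ∃ X : Set V, IsDualMVSet G X ∧ X.ncard = n}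

/-- the total mutual-visibility number μ_t(G) -/
noncomputable def muT {V : Type*} (G : SimpleGraph V) : ℕ :=
  sSup {n | ∃ X : Set V, IsTotalMVSet G X ∧ X.ncard = n}


namespace MVAux

variable {V : Type*}

/-- Segment decomposition of a geodesic walk at a support vertex. -/
lemma seg {Γ : SimpleGraph V} (hΓ : Γ.Connected) {a b : V} (W : Γ.Walk a b)
    (hW : W.length = Γ.dist a b) {z : V} (hz : z ∈ W.support) :
    ∃ (W₁ : Γ.Walk a z) (W₂ : Γ.Walk z b),
      W₁.length = Γ.dist a z ∧ W₂.length = Γ.dist z b ∧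
      Γ.dist a z + Γ.dist z b = Γ.dist a b ∧
      W₁.support ⊆ W.support ∧ W₂.support ⊆ W.support ∧
      W₁.edges ⊆ W.edges ∧ W₂.edges ⊆ W.edges ∧
      (∀ e ∈ W.edges, e ∈ W₁.edges ∨ e ∈ W₂.edges) := by
  classical
  refine ⟨W.takeUntil z hz, W.dropUntil z hz, ?_⟩
  have hspec := W.take_spec hz
  have hlen : (W.takeUntil z hz).length + (W.dropUntil z hz).length = W.length := by
    conv_rhs => rw [← hspec]
    rw [Walk.length_append]
  have h1 : Γ.dist a z ≤ (W.takeUntil z hz).length := dist_le _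
  have h2 : Γ.dist z b ≤ (W.dropUntil z hz).length := dist_le _
  have h3 : Γ.dist a b ≤ Γ.dist a z + Γ.dist z b := hΓ.dist_triangle
  have hedges : (W.takeUntil z hz).edges ++ (W.dropUntil z hz).edges = W.edges := by
    conv_rhs => rw [← hspec]
    rw [Walk.edges_append]
  refine ⟨by omega, by omega, by omega,
    W.support_takeUntil_subset hz, W.support_dropUntil_subset hz,
    W.edges_takeUntil_subset hz, W.edges_dropUntil_subset hz, ?_⟩
  intro e he
  rw [← hedges] at he
  exact List.mem_append.mp he

/-- First vertex of `S` (other than the start) along a walk, with decomposition. -/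
lemma firstSplit {Γ : SimpleGraph V} (S : Set V) {a b : V} (W : Γ.Walk a b) :
    (∀ z ∈ W.support, z ∈ S → z = a ∨ z = b) ∨
    ∃ (s w : V) (A : Γ.Walk a s) (h : Γ.Adj s w) (B : Γ.Walk w b),
      w ∈ S ∧ A.length + 1 + B.length = W.length ∧
      (∀ z ∈ A.support, z ∈ S → z = a) ∧
      A.edges ⊆ W.edges ∧ B.edges ⊆ W.edges ∧ s(s, w) ∈ W.edges ∧
      A.support ⊆ W.support ∧ B.support ⊆ W.support := by
  classical
  induction W with
  | nil =>
    left; intro z hz _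
    simp only [Walk.support_nil, List.mem_singleton] at hz
    exact Or.inl hz
  | @cons a c b h' W' ih =>
    by_cases hc : c ∈ S ∧ c ≠ a
    · right
      refine ⟨a, c, Walk.nil, h', W', hc.1, by simp; omega, ?_, by simp, ?_, ?_, ?_, ?_⟩
      · intro z hz _; simpa using hz
      · intro e he; rw [Walk.edges_cons]; exact List.mem_cons_of_mem _ he
      · rw [Walk.edges_cons]; exact List.mem_cons_self
      · intro z hz; simp at hz; simp [hz]
      · intro z hz; rw [Walk.support_cons]; exact List.mem_cons_of_mem _ hz
    · push_neg at hc
      rcases ih with hclean | ⟨s, w, A, h, B, hwS, hlen, hA, hAe, hBe, hsw, hAs, hBs⟩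
      · left
        intro z hz hzS
        rw [Walk.support_cons, List.mem_cons] at hz
        rcases hz with rfl | hz
        · exact Or.inl rfl
        · rcases hclean z hz hzS with rfl | rfl
          · exact Or.inl (hc hzS)
          · exact Or.inr rfl
      · right
        refine ⟨s, w, Walk.cons h' A, h, B, hwS, by simp [Walk.length_cons]; omega, ?_, ?_, ?_,
          ?_, ?_, ?_⟩
        · intro z hz hzS
          rw [Walk.support_cons, List.mem_cons] at hz
          rcases hz with rfl | hz
          · rfl
          · rcases hA z hz hzS with rfl
            exact hc hzS
        · intro e he
          rw [Walk.edges_cons] at he ⊢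
          rcases List.mem_cons.mp he with rfl | he
          · exact List.mem_cons_self
          · exact List.mem_cons_of_mem _ (hAe he)
        · intro e he; rw [Walk.edges_cons]; exact List.mem_cons_of_mem _ (hBe he)
        · rw [Walk.edges_cons]; exact List.mem_cons_of_mem _ hsw
        · intro z hz
          rw [Walk.support_cons, List.mem_cons] at hz ⊢
          rcases hz with rfl | hz
          · exact Or.inl rfl
          · exact Or.inr (hAs hz)
        · intro z hz; rw [Walk.support_cons]; exact List.mem_cons_of_mem _ (hBs hz)

variable {G : SimpleGraph V} {x y : V}

/-- Transfer an `H = G.deleteEdges {s(x,y)}`-walk to `G`. -/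
lemma walk_up {H : SimpleGraph V} (hH : H = G.deleteEdges {s(x, y)}) {a b : V}
    (p : H.Walk a b) :
    ∃ q : G.Walk a b, q.length = p.length ∧ q.support = p.support ∧ q.edges = p.edges := by
  have hsub : ∀ e ∈ p.edges, e ∈ G.edgeSet := by
    intro e he
    have := p.edges_subset_edgeSet he
    rw [hH] at this
    exact edgeSet_mono (G.deleteEdges_le _) this
  exact ⟨p.transfer G hsub, p.length_transfer _, p.support_transfer _, p.edges_transfer _⟩

/-- An `H`-walk does not use the deleted edge. -/
lemma walk_up_edge {H : SimpleGraph V} (hH : H = G.deleteEdges {s(x, y)}) {a b : V}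
    (p : H.Walk a b) : s(x, y) ∉ p.edges := by
  intro he
  have := p.edges_subset_edgeSet he
  rw [hH, edgeSet_deleteEdges] at this
  exact this.2 rfl

/-- Transfer an edge-free `G`-walk to `H`. -/
lemma walk_down {H : SimpleGraph V} (hH : H = G.deleteEdges {s(x, y)}) {a b : V}
    (q : G.Walk a b) (hq : s(x, y) ∉ q.edges) :
    ∃ p : H.Walk a b, p.length = q.length ∧ p.support = q.support := by
  have hsub : ∀ e ∈ q.edges, e ∈ H.edgeSet := by
    intro e he
    rw [hH, edgeSet_deleteEdges]
    refine ⟨q.edges_subset_edgeSet he, ?_⟩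
    intro hmem
    rw [Set.mem_singleton_iff] at hmem
    exact hq (hmem ▸ he)
  exact ⟨q.transfer H hsub, q.length_transfer _, q.support_transfer _⟩

/-- `G`-distance is at most `H`-distance. -/
lemma distG_le_distH {H : SimpleGraph V} (hH : H = G.deleteEdges {s(x, y)})
    (hconn : H.Connected) (a b : V) : G.dist a b ≤ H.dist a b := by
  obtain ⟨p, hp⟩ := hconn.exists_walk_length_eq_dist a b
  obtain ⟨q, hq, -, -⟩ := walk_up hH p
  calc G.dist a b ≤ q.length := dist_le q
  _ = H.dist a b := by rw [hq, hp]



/-- there is an edge-free geodesic from `u` to `x` internally avoiding `X`. -/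
def A1prop (G : SimpleGraph V) (X : Set V) (x y u : V) : Prop :=
  ∃ T : G.Walk u x, T.length = G.dist u x ∧ s(x, y) ∉ T.edges ∧
    ∀ z ∈ T.support, z ∈ X → z = u ∨ z = x


def BaSet (G H : SimpleGraph V) (X : Set V) (x y : V) : Set V :=
  {u | u ∈ X ∧ G.dist u x = G.dist u y + 1 ∧ ¬A1prop G X x y u ∧ H.dist u x = G.dist u x}

def ZSet (G H : SimpleGraph V) (X : Set V) (x y : V) : Set V :=
  {u | u ∈ X ∧ G.dist u x = G.dist u y + 1 ∧ H.dist u x ≠ G.dist u x}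

def GoodSet (G H : SimpleGraph V) (X : Set V) (x y : V) : Set V :=
  {u | u ∈ X ∧ (G.dist u x = G.dist u y ∨
    (G.dist u x = G.dist u y + 1 ∧ A1prop G X x y u) ∨
    (G.dist u y = G.dist u x + 1 ∧ A1prop G X y x u))}

variable {G : SimpleGraph V} {x y : V} {H : SimpleGraph V} {X : Set V}

/-- Push an edge-free geodesic `G`-walk down to an `H`-geodesic with the same
avoidance property. -/
lemma toH (hH : H = G.deleteEdges {s(x, y)}) (hconn : H.Connected) (S : Set V) {u v : V}
    (W₀ : G.Walk u v) (hlen : W₀.length = G.dist u v) (hef : s(x, y) ∉ W₀.edges)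
    (hcond : ∀ z ∈ W₀.support, z ∈ S → z = u ∨ z = v) :
    ∃ W : H.Walk u v, W.length = H.dist u v ∧ ∀ z ∈ W.support, z ∈ S → z = u ∨ z = v := by
  obtain ⟨W, hWl, hWs⟩ := walk_down hH W₀ hef
  have hd : H.dist u v = G.dist u v := by
    have h1 : H.dist u v ≤ G.dist u v := by rw [← hlen, ← hWl]; exact dist_le W
    exact le_antisymm h1 (distG_le_distH hH hconn u v)
  refine ⟨W, by rw [hWl, hlen, hd], ?_⟩
  intro z hz
  rw [hWs] at hz
  exact hcond z hz

lemma visC0 (hH : H = G.deleteEdges {s(x, y)}) (hG : G.Connected) (hxy : G.Adj x y)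
    (hconn : H.Connected) (hX : IsOuterMVSet G X) {u : V} (hu : u ∈ X)
    (h0 : G.dist u x = G.dist u y) (v : V) :
    ∃ W : H.Walk u v, W.length = H.dist u v ∧ ∀ z ∈ W.support, z ∈ X → z = u ∨ z = v := by
  obtain ⟨W₀, hlen, hcond⟩ := hX u hu v
  have hef : s(x, y) ∉ W₀.edges := by
    intro he
    have hxs : x ∈ W₀.support := W₀.fst_mem_support_of_mem_edges he
    obtain ⟨W₁, W₂, h1, h2, hadd, -, -, -, -, hcase⟩ := seg hG W₀ hlen hxs
    have hdxy : G.dist x y = 1 := dist_eq_one_iff_adj.mpr hxy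
    rcases hcase _ he with h | h
    · have hys : y ∈ W₁.support := W₁.snd_mem_support_of_mem_edges h
      obtain ⟨-, -, -, -, hadd1, -⟩ := seg hG W₁ h1 hys
      have hdyx : G.dist y x = 1 := by rw [dist_comm]; exact hdxy
      omega
    · have hys : y ∈ W₂.support := W₂.snd_mem_support_of_mem_edges h
      obtain ⟨-, -, -, -, hadd2, -⟩ := seg hG W₂ h2 hys
      have htri : G.dist u v ≤ G.dist u y + G.dist y v := hG.dist_triangle
      omega
  exact toH hH hconn X W₀ hlen hef hcond

lemma visA1 (hH : H = G.deleteEdges {s(x, y)}) (hG : G.Connected) (hxy : G.Adj x y)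
    (hconn : H.Connected) (hX : IsOuterMVSet G X) {u : V} (hu : u ∈ X)
    (h1 : G.dist u x = G.dist u y + 1)
    (hA : ∃ T : G.Walk u x, T.length = G.dist u x ∧ s(x, y) ∉ T.edges ∧
      ∀ z ∈ T.support, z ∈ X → z = u ∨ z = x) (v : V) :
    ∃ W : H.Walk u v, W.length = H.dist u v ∧ ∀ z ∈ W.support, z ∈ X → z = u ∨ z = v := by
  obtain ⟨T, hTl, hTe, hTc⟩ := hA
  obtain ⟨W₀, hlen, hcond⟩ := hX u hu v
  by_cases hef : s(x, y) ∈ W₀.edges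
  · have hxs : x ∈ W₀.support := W₀.fst_mem_support_of_mem_edges hef
    by_cases hvx : v = x
    · subst hvx
      exact toH hH hconn X T hTl hTe hTc
    · obtain ⟨W₁, W₂, h1', h2', hadd, hs1, hs2, he1, he2, hcase⟩ := seg hG W₀ hlen hxs
      have hdxy : G.dist x y = 1 := dist_eq_one_iff_adj.mpr hxy
      have hW₂ef : s(x, y) ∉ W₂.edges := by
        intro he
        have hys : y ∈ W₂.support := W₂.snd_mem_support_of_mem_edges he
        obtain ⟨-, -, -, -, hadd2, -⟩ := seg hG W₂ h2' hys
        have htri : G.dist u v ≤ G.dist u y + G.dist y v := hG.dist_triangle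
        omega
      have hxX : x ∉ X := by
        intro hxX
        rcases hcond x hxs hxX with h | h
        · rw [← h] at h1
          rw [SimpleGraph.dist_self] at h1
          omega
        · exact hvx h.symm
      refine toH hH hconn X (T.append W₂) ?_ ?_ ?_
      · rw [Walk.length_append, hTl, h2', hadd]
      · rw [Walk.edges_append]
        intro he
        rcases List.mem_append.mp he with h | h
        · exact hTe h
        · exact hW₂ef h
      · intro z hz hzX
        rcases (Walk.mem_support_append_iff _ _).mp hz with h | h
        · rcases hTc z h hzX with rfl | rfl
          · exact Or.inl rfl
          · exact absurd hzX hxX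
        · exact hcond z (hs2 h) hzX
  · exact toH hH hconn X W₀ hlen hef hcond



lemma BaQ1 (hH : H = G.deleteEdges {s(x, y)}) (hG : G.Connected) (hxy : G.Adj x y)
    (hconn : H.Connected) (hX : IsOuterMVSet G X) {u : V} (hu : u ∈ BaSet G H X x y) :
    ∃ RQ : G.Walk u x, RQ.length = G.dist u x ∧ s(x, y) ∉ RQ.edges ∧
      ∀ z ∈ RQ.support, z ∈ BaSet G H X x y → z = u ∨ z = x := by
  obtain ⟨huX, hε, hnA, hδ⟩ := hu
  obtain ⟨p, hp⟩ := hconn.exists_walk_length_eq_dist u x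
  obtain ⟨R, hRl, hRs, hRe⟩ := walk_up hH p
  have hRlen : R.length = G.dist u x := by rw [hRl, hp, hδ]
  have hRef : s(x, y) ∉ R.edges := by rw [hRe]; exact walk_up_edge hH p
  rcases firstSplit X R.reverse with hclean |
    ⟨s', w, A, hadj, B, hwX, hlensum, hAcond, hAe, hBe, hsw, hAs, hBs⟩
  · refine absurd ⟨R, hRlen, hRef, fun z hz hzX => ?_⟩ hnA
    have := hclean z (by rw [Walk.support_reverse]; exact List.mem_reverse.mpr hz) hzX
    tauto
  · have hlen2 : A.length + 1 + B.length = G.dist u x := by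
      rw [Walk.length_reverse] at hlensum; omega
    have hrev_edges : ∀ e, e ∈ R.reverse.edges → e ∈ R.edges := by
      intro e he; rw [Walk.edges_reverse, List.mem_reverse] at he; exact he
    set tail : G.Walk w x := Walk.cons hadj.symm A.reverse with htail
    have htl : tail.length = A.length + 1 := by
      rw [htail, Walk.length_cons, Walk.length_reverse]
    have h1 : G.dist u w ≤ B.length := by
      have := dist_le B; rwa [dist_comm] at this
    have h2 : G.dist w x ≤ A.length + 1 := by rw [← htl]; exact dist_le tail
    have htri : G.dist u x ≤ G.dist u w + G.dist w x := hG.dist_triangle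
    have hduw : G.dist u w = B.length := by omega
    have hdwx : G.dist w x = A.length + 1 := by omega
    have htailef : s(x, y) ∉ tail.edges := by
      intro he
      rw [htail, Walk.edges_cons] at he
      rcases List.mem_cons.mp he with h | h
      · apply hRef
        rw [h, Sym2.eq_swap]
        exact hrev_edges _ hsw
      · rw [Walk.edges_reverse, List.mem_reverse] at h
        exact hRef (hrev_edges _ (hAe h))
    have htailc : ∀ z ∈ tail.support, z ∈ X → z = w ∨ z = x := by
      intro z hz hzX
      rw [htail, Walk.support_cons] at hz
      rcases List.mem_cons.mp hz with rfl | hz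
      · exact Or.inl rfl
      · rw [Walk.support_reverse, List.mem_reverse] at hz
        exact Or.inr (hAcond z hz hzX)
    have hAw : A1prop G X x y w := ⟨tail, by rw [htl, hdwx], htailef, htailc⟩
    by_cases hwu : w = u
    · subst hwu; exact absurd hAw hnA
    · have hwnBa : w ∉ BaSet G H X x y := fun hwBa => hwBa.2.2.1 hAw
      obtain ⟨W₃, hW₃l, hW₃c⟩ := hX u huX w
      have hW₃ef : s(x, y) ∉ W₃.edges := by
        intro he
        have hxs : x ∈ W₃.support := W₃.fst_mem_support_of_mem_edges he
        obtain ⟨-, -, -, -, haddw, -⟩ := seg hG W₃ hW₃l hxs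
        have hcomm : G.dist x w = G.dist w x := dist_comm
        omega
      refine ⟨W₃.append tail, ?_, ?_, ?_⟩
      · rw [Walk.length_append, hW₃l, htl]; omega
      · rw [Walk.edges_append]
        intro he
        rcases List.mem_append.mp he with h | h
        · exact hW₃ef h
        · exact htailef h
      · intro z hz hzBa
        rcases (Walk.mem_support_append_iff _ _).mp hz with h | h
        · rcases hW₃c z h hzBa.1 with rfl | rfl
          · exact Or.inl rfl
          · exact absurd hzBa hwnBa
        · rcases htailc z h hzBa.1 with rfl | rfl
          · exact absurd hzBa hwnBa
          · exact Or.inr rfl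

lemma visBa (hH : H = G.deleteEdges {s(x, y)}) (hG : G.Connected) (hxy : G.Adj x y)
    (hconn : H.Connected) (hX : IsOuterMVSet G X) {u : V} (hu : u ∈ BaSet G H X x y) (v : V) :
    ∃ W : H.Walk u v, W.length = H.dist u v ∧
      ∀ z ∈ W.support, z ∈ BaSet G H X x y → z = u ∨ z = v := by
  obtain ⟨W₀, hlen, hcond⟩ := hX u hu.1 v
  by_cases hef : s(x, y) ∈ W₀.edges
  · obtain ⟨RQ, hRQl, hRQe, hRQc⟩ := BaQ1 hH hG hxy hconn hX hu
    obtain ⟨huX, hε, hnA, hδ⟩ := hu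
    have hxs : x ∈ W₀.support := W₀.fst_mem_support_of_mem_edges hef
    by_cases hvx : v = x
    · subst hvx
      exact toH hH hconn _ RQ hRQl hRQe hRQc
    · obtain ⟨W₁, W₂, h1', h2', hadd, hs1, hs2, he1, he2, hcase⟩ := seg hG W₀ hlen hxs
      have hdxy : G.dist x y = 1 := dist_eq_one_iff_adj.mpr hxy
      have hW₂ef : s(x, y) ∉ W₂.edges := by
        intro he
        have hys : y ∈ W₂.support := W₂.snd_mem_support_of_mem_edges he
        obtain ⟨-, -, -, -, hadd2, -⟩ := seg hG W₂ h2' hys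
        have htri : G.dist u v ≤ G.dist u y + G.dist y v := hG.dist_triangle
        omega
      have hxX : x ∉ X := by
        intro hxX
        rcases hcond x hxs hxX with h | h
        · rw [← h] at hε; rw [SimpleGraph.dist_self] at hε; omega
        · exact hvx h.symm
      refine toH hH hconn _ (RQ.append W₂) ?_ ?_ ?_
      · rw [Walk.length_append, hRQl, h2', hadd]
      · rw [Walk.edges_append]
        intro he
        rcases List.mem_append.mp he with h | h
        · exact hRQe h
        · exact hW₂ef h
      · intro z hz hzBa
        rcases (Walk.mem_support_append_iff _ _).mp hz with h | h
        · rcases hRQc z h hzBa with rfl | rfl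
          · exact Or.inl rfl
          · exact absurd hzBa.1 hxX
        · exact hcond z (hs2 h) hzBa.1
  · exact toH hH hconn _ W₀ hlen hef (fun z hz hzBa => hcond z hz hzBa.1)



/-- geodesics between two vertices strictly closer to `y` avoid the edge `xy`. -/
lemma geo_ef (hG : G.Connected) (hxy : G.Adj x y) {p q : V}
    (hp : G.dist p x = G.dist p y + 1) (hq : G.dist q x = G.dist q y + 1)
    (M : G.Walk p q) (hM : M.length = G.dist p q) : s(x, y) ∉ M.edges := by
  intro he
  have hxs := M.fst_mem_support_of_mem_edges he
  have hys := M.snd_mem_support_of_mem_edges he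
  obtain ⟨-, -, -, -, haddx, -⟩ := seg hG M hM hxs
  obtain ⟨-, -, -, -, haddy, -⟩ := seg hG M hM hys
  have h1 : G.dist x q = G.dist q x := SimpleGraph.dist_comm
  have h2 : G.dist y q = G.dist q y := SimpleGraph.dist_comm
  omega

lemma L1dist (hH : H = G.deleteEdges {s(x, y)}) (hG : G.Connected) (hxy : G.Adj x y)
    (hconn : H.Connected) {p q : V}
    (hp : G.dist p x = G.dist p y + 1) (hq : G.dist q x = G.dist q y + 1) :
    H.dist p q = G.dist p q := by
  obtain ⟨M, hM⟩ := hG.exists_walk_length_eq_dist p q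
  obtain ⟨M', hM'l, -⟩ := walk_down hH M (geo_ef hG hxy hp hq M hM)
  exact le_antisymm (by rw [← hM, ← hM'l]; exact dist_le M') (distG_le_distH hH hconn p q)

lemma core (hH : H = G.deleteEdges {s(x, y)}) (hG : G.Connected) (hxy : G.Adj x y)
    (hconn : H.Connected) (hX : IsOuterMVSet G X) {u : V} (hu : u ∈ ZSet G H X x y) :
    ∀ (n : ℕ) {c : V} (R : G.Walk u c), c ∉ ZSet G H X x y → R.length = G.dist u c →
      s(x, y) ∉ R.edges → R.length ≤ n →
      ∃ P : G.Walk u c, P.length = G.dist u c ∧ s(x, y) ∉ P.edges ∧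
        ∀ z ∈ P.support, z ∈ ZSet G H X x y → z = u ∨ z = c := by
  obtain ⟨huX, huε, huδ⟩ := hu
  intro n
  induction n with
  | zero =>
    intro c R hc hRl hRe hn
    rcases firstSplit (ZSet G H X x y) R.reverse with hclean | ⟨s', w, A, hadj, B, hwZ,
      hlensum, hAcond, hAe, hBe, hsw, hAs, hBs⟩
    · refine ⟨R, hRl, hRe, fun z hz hzZ => ?_⟩
      have := hclean z (by rw [Walk.support_reverse]; exact List.mem_reverse.mpr hz) hzZ
      tauto
    · rw [Walk.length_reverse] at hlensum; omega
  | succ n ih =>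
    intro c R hc hRl hRe hn
    rcases firstSplit (ZSet G H X x y) R.reverse with hclean | ⟨s', w, A, hadj, B, hwZ,
      hlensum, hAcond, hAe, hBe, hsw, hAs, hBs⟩
    · refine ⟨R, hRl, hRe, fun z hz hzZ => ?_⟩
      have := hclean z (by rw [Walk.support_reverse]; exact List.mem_reverse.mpr hz) hzZ
      tauto
    · have hlen2 : A.length + 1 + B.length = G.dist u c := by
        rw [Walk.length_reverse] at hlensum; omega
      have hrev_edges : ∀ e, e ∈ R.reverse.edges → e ∈ R.edges := by
        intro e he; rw [Walk.edges_reverse, List.mem_reverse] at he; exact he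
      set pre : G.Walk u s' := B.reverse.concat hadj.symm with hpre
      have hprel : pre.length = B.length + 1 := by
        rw [hpre, Walk.length_concat, Walk.length_reverse]
      have h1 : G.dist u w ≤ B.length := by
        have := dist_le B; rwa [SimpleGraph.dist_comm] at this
      have h2 : G.dist u s' ≤ B.length + 1 := by rw [← hprel]; exact dist_le pre
      have h3 : G.dist s' c ≤ A.length := by
        have := dist_le A; rwa [SimpleGraph.dist_comm] at this
      have htri : G.dist u c ≤ G.dist u s' + G.dist s' c := hG.dist_triangle
      have hdus : G.dist u s' = B.length + 1 := by omega
      have hdsc : G.dist s' c = A.length := by omega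
      obtain ⟨hwX, hwε, hwδ⟩ := hwZ
      by_cases hA0 : A.length = 0
      · have hcs : c = s' := Walk.eq_of_length_eq_zero hA0
        subst hcs
        by_cases hcy : G.dist c y ≤ G.dist c x
        · obtain ⟨W₄, hW₄l, hW₄c⟩ := hX u huX c
          have hef4 : s(x, y) ∉ W₄.edges := by
            intro he
            have hxs := W₄.fst_mem_support_of_mem_edges he
            have hys := W₄.snd_mem_support_of_mem_edges he
            obtain ⟨-, -, -, -, haddx, -⟩ := seg hG W₄ hW₄l hxs
            obtain ⟨-, -, -, -, haddy, -⟩ := seg hG W₄ hW₄l hys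
            have c1 : G.dist x c = G.dist c x := SimpleGraph.dist_comm
            have c2 : G.dist y c = G.dist c y := SimpleGraph.dist_comm
            omega
          exact ⟨W₄, hW₄l, hef4, fun z hz hzZ => hW₄c z hz hzZ.1⟩
        · push_neg at hcy
          exfalso
          have hcx : c ≠ x := by
            intro h
            obtain ⟨R', hR'l, -⟩ := walk_down hH R hRe
            apply huδ
            rw [← h]
            exact le_antisymm (by rw [← hRl, ← hR'l]; exact dist_le R')
              (distG_le_distH hH hconn u c)
          obtain ⟨K, hK⟩ := hG.exists_walk_length_eq_dist c x
          have hKef : s(x, y) ∉ K.edges := by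
            intro he
            have hys := K.snd_mem_support_of_mem_edges he
            obtain ⟨-, -, -, -, haddy, -⟩ := seg hG K hK hys
            have hyx : G.dist y x = 1 := by
              rw [SimpleGraph.dist_comm]; exact dist_eq_one_iff_adj.mpr hxy
            omega
          have hwc : G.Adj w c := hadj.symm
          set NW : G.Walk w x := Walk.cons hwc K with hNW
          have hNWl : NW.length = G.dist c x + 1 := by
            rw [hNW, Walk.length_cons, hK]
          have hdcw : G.dist c w ≤ 1 := by
            have := dist_le (Walk.cons hwc.symm (Walk.nil) : G.Walk c w)
            simpa using this
          have htri2 : G.dist c y ≤ G.dist c w + G.dist w y := hG.dist_triangle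
          have harith1 : G.dist c x ≤ G.dist w y := by omega
          have hNWef : s(x, y) ∉ NW.edges := by
            intro he
            rw [hNW, Walk.edges_cons] at he
            rcases List.mem_cons.mp he with h | h
            · rw [Sym2.eq_iff] at h
              rcases h with ⟨h1, h2⟩ | ⟨h1, h2⟩
              · rw [← h1] at hwε
                rw [SimpleGraph.dist_self] at hwε; omega
              · exact hcx h1.symm
            · exact hKef h
          have hNWd : G.dist w x ≤ G.dist c x + 1 := by rw [← hNWl]; exact dist_le NW
          have hNWgeo : NW.length = G.dist w x := by omega
          obtain ⟨NW', hNW'l, -⟩ := walk_down hH NW hNWef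
          exact hwδ (le_antisymm (by rw [← hNWgeo, ← hNW'l]; exact dist_le NW')
            (distG_le_distH hH hconn w x))
      · have hsc : s' ≠ c := by
          intro h; subst h
          rw [SimpleGraph.dist_self] at hdsc; omega
        have hsnZ : s' ∉ ZSet G H X x y := by
          intro hsZ
          exact hsc (hAcond s' A.end_mem_support hsZ)
        have hpre_e : s(x, y) ∉ pre.edges := by
          intro he
          rw [hpre, Walk.edges_concat, List.concat_eq_append] at he
          rcases List.mem_append.mp he with h | h
          · rw [Walk.edges_reverse, List.mem_reverse] at h
            exact hRe (hrev_edges _ (hBe h))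
          · simp only [List.mem_singleton] at h
            apply hRe
            rw [h, Sym2.eq_swap]
            exact hrev_edges _ hsw
        have hpre_geo : pre.length = G.dist u s' := by rw [hprel, hdus]
        obtain ⟨P', hP'l, hP'e, hP'c⟩ := ih pre hsnZ hpre_geo hpre_e (by omega)
        refine ⟨P'.append A.reverse, ?_, ?_, ?_⟩
        · rw [Walk.length_append, hP'l, Walk.length_reverse]; omega
        · rw [Walk.edges_append]
          intro he
          rcases List.mem_append.mp he with h | h
          · exact hP'e h
          · rw [Walk.edges_reverse, List.mem_reverse] at h
            exact hRe (hrev_edges _ (hAe h))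
        · intro z hz hzZ
          rcases (Walk.mem_support_append_iff _ _).mp hz with h | h
          · rcases hP'c z h hzZ with rfl | rfl
            · exact Or.inl rfl
            · exact absurd hzZ hsnZ
          · rw [Walk.support_reverse, List.mem_reverse] at h
            exact Or.inr (hAcond z h hzZ)

lemma visZ (hH : H = G.deleteEdges {s(x, y)}) (hG : G.Connected) (hxy : G.Adj x y)
    (hconn : H.Connected) (hX : IsOuterMVSet G X) {u : V} (hu : u ∈ ZSet G H X x y) (t : V) :
    ∃ W : H.Walk u t, W.length = H.dist u t ∧
      ∀ z ∈ W.support, z ∈ ZSet G H X x y → z = u ∨ z = t := by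
  by_cases htZ : t ∈ ZSet G H X x y
  · obtain ⟨W₅, hl, hc⟩ := hX u hu.1 t
    exact toH hH hconn _ W₅ hl (geo_ef hG hxy hu.2.1 htZ.2.1 W₅ hl)
      (fun z hz hzZ => hc z hz hzZ.1)
  · obtain ⟨Q, hQ⟩ := hconn.exists_walk_length_eq_dist u t
    rcases firstSplit (ZSet G H X x y) Q.reverse with hclean | ⟨s', w, A, hadj, B, hwZ,
      hlensum, hAcond, hAe, hBe, hsw, hAs, hBs⟩
    · refine ⟨Q, hQ, fun z hz hzZ => ?_⟩
      have := hclean z (by rw [Walk.support_reverse]; exact List.mem_reverse.mpr hz) hzZ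
      tauto
    · have hlen2 : A.length + 1 + B.length = H.dist u t := by
        rw [Walk.length_reverse] at hlensum; omega
      set preH : H.Walk u s' := B.reverse.concat hadj.symm with hpreH
      have hprel : preH.length = B.length + 1 := by
        rw [hpreH, Walk.length_concat, Walk.length_reverse]
      have h1 : H.dist u w ≤ B.length := by
        have := dist_le B; rwa [SimpleGraph.dist_comm] at this
      have h2 : H.dist u s' ≤ B.length + 1 := by rw [← hprel]; exact dist_le preH
      have h3 : H.dist s' t ≤ A.length := by
        have := dist_le A; rwa [SimpleGraph.dist_comm] at this
      have h4 : H.dist w t ≤ A.length + 1 := by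
        have := dist_le (Walk.cons hadj.symm A.reverse : H.Walk w t)
        simpa [Walk.length_cons, Walk.length_reverse] using this
      have htriH : H.dist u t ≤ H.dist u s' + H.dist s' t := hconn.dist_triangle
      have htriH2 : H.dist u t ≤ H.dist u w + H.dist w t := hconn.dist_triangle
      have hdus : H.dist u s' = B.length + 1 := by omega
      have hdst : H.dist s' t = A.length := by omega
      have hduw : H.dist u w = B.length := by omega
      have hwZ' := hwZ
      obtain ⟨hwX, hwε, hwδ⟩ := hwZ'
      have hL1 : H.dist u w = G.dist u w := L1dist hH hG hxy hconn hu.2.1 hwε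
      have hsnZ : s' ∉ ZSet G H X x y := by
        intro hsZ
        have := hAcond s' A.end_mem_support hsZ
        subst this
        exact htZ hsZ
      by_cases hus : G.dist u s' = H.dist u s'
      · obtain ⟨preG, hpgl, hpgs, hpge⟩ := walk_up hH preH
        have hpre_geo : preG.length = G.dist u s' := by rw [hpgl, hprel, hus, hdus]
        have hpre_ef : s(x, y) ∉ preG.edges := by
          rw [hpge]; exact walk_up_edge hH preH
        obtain ⟨P, hPl, hPe, hPc⟩ := core hH hG hxy hconn hX hu preG.length preG hsnZ
          hpre_geo hpre_ef le_rfl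
        obtain ⟨PH, hPHl, hPHs⟩ := walk_down hH P hPe
        refine ⟨PH.append A.reverse, ?_, ?_⟩
        · rw [Walk.length_append, hPHl, hPl, Walk.length_reverse]; omega
        · intro z hz hzZ
          rcases (Walk.mem_support_append_iff _ _).mp hz with h | h
          · rw [hPHs] at h
            rcases hPc z h hzZ with rfl | rfl
            · exact Or.inl rfl
            · exact absurd hzZ hsnZ
          · rw [Walk.support_reverse, List.mem_reverse] at h
            exact Or.inr (hAcond z h hzZ)
      · exfalso
        have hlt : G.dist u s' < H.dist u s' :=
          lt_of_le_of_ne (distG_le_distH hH hconn u s') hus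
        obtain ⟨M, hM⟩ := hG.exists_walk_length_eq_dist u s'
        have hMe : s(x, y) ∈ M.edges := by
          by_contra hMe
          obtain ⟨M', hM'l, -⟩ := walk_down hH M hMe
          have : H.dist u s' ≤ G.dist u s' := by rw [← hM, ← hM'l]; exact dist_le M'
          omega
        have hxs := M.fst_mem_support_of_mem_edges hMe
        obtain ⟨-, -, -, -, haddx, -⟩ := seg hG M hM hxs
        have hws' : G.Adj w s' := (G.deleteEdges_le _) (hH ▸ hadj.symm)
        have hdws : G.dist w s' ≤ 1 := by
          have := dist_le (Walk.cons hws' (Walk.nil) : G.Walk w s')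
          simpa using this
        have htr1 : G.dist x w ≤ G.dist x s' + G.dist s' w := hG.dist_triangle
        have htr2 : G.dist u w ≤ G.dist u y + G.dist y w := hG.dist_triangle
        have c1 : G.dist x w = G.dist w x := SimpleGraph.dist_comm
        have c2 : G.dist y w = G.dist w y := SimpleGraph.dist_comm
        have c3 : G.dist s' w = G.dist w s' := SimpleGraph.dist_comm
        have huε := hu.2.1
        omega



lemma outer_good (hH : H = G.deleteEdges {s(x, y)}) (hG : G.Connected) (hxy : G.Adj x y)
    (hconn : H.Connected) (hX : IsOuterMVSet G X) :
    IsOuterMVSet H (GoodSet G H X x y) := by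
  intro u hu v
  obtain ⟨huX, hcase⟩ := hu
  have hH' : H = G.deleteEdges {s(y, x)} := by rw [Sym2.eq_swap]; exact hH
  rcases hcase with h0 | ⟨h1, hA⟩ | ⟨h1, hA⟩
  · obtain ⟨W, hWl, hWc⟩ := visC0 hH hG hxy hconn hX huX h0 v
    exact ⟨W, hWl, fun z hz hzG => hWc z hz hzG.1⟩
  · obtain ⟨W, hWl, hWc⟩ := visA1 hH hG hxy hconn hX huX h1 hA v
    exact ⟨W, hWl, fun z hz hzG => hWc z hz hzG.1⟩
  · obtain ⟨W, hWl, hWc⟩ := visA1 hH' hG hxy.symm hconn hX huX h1 hA v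
    exact ⟨W, hWl, fun z hz hzG => hWc z hz hzG.1⟩

lemma outer_Ba (hH : H = G.deleteEdges {s(x, y)}) (hG : G.Connected) (hxy : G.Adj x y)
    (hconn : H.Connected) (hX : IsOuterMVSet G X) :
    IsOuterMVSet H (BaSet G H X x y) := by
  intro u hu v
  obtain ⟨W, hWl, hWc⟩ := visBa hH hG hxy hconn hX hu v
  exact ⟨W, hWl, hWc⟩

lemma outer_Z (hH : H = G.deleteEdges {s(x, y)}) (hG : G.Connected) (hxy : G.Adj x y)
    (hconn : H.Connected) (hX : IsOuterMVSet G X) :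
    IsOuterMVSet H (ZSet G H X x y) := by
  intro u hu v
  obtain ⟨W, hWl, hWc⟩ := visZ hH hG hxy hconn hX hu v
  exact ⟨W, hWl, hWc⟩

lemma cover (hG : G.Connected) (hxy : G.Adj x y) :
    X ⊆ GoodSet G H X x y ∪ (BaSet G H X x y ∪ (ZSet G H X x y ∪
      (BaSet G H X y x ∪ ZSet G H X y x))) := by
  intro u huX
  have hdxy : G.dist x y = 1 := dist_eq_one_iff_adj.mpr hxy
  have hdyx : G.dist y x = 1 := by rw [SimpleGraph.dist_comm]; exact hdxy
  have ht1 : G.dist u x ≤ G.dist u y + G.dist y x := hG.dist_triangle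
  have ht2 : G.dist u y ≤ G.dist u x + G.dist x y := hG.dist_triangle
  by_cases h0 : G.dist u x = G.dist u y
  · exact Or.inl ⟨huX, Or.inl h0⟩
  · have : G.dist u x = G.dist u y + 1 ∨ G.dist u y = G.dist u x + 1 := by omega
    rcases this with h1 | h1
    · by_cases hA : A1prop G X x y u
      · exact Or.inl ⟨huX, Or.inr (Or.inl ⟨h1, hA⟩)⟩
      · by_cases hδ : H.dist u x = G.dist u x
        · exact Or.inr (Or.inl ⟨huX, h1, hA, hδ⟩)
        · exact Or.inr (Or.inr (Or.inl ⟨huX, h1, hδ⟩))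
    · by_cases hA : A1prop G X y x u
      · exact Or.inl ⟨huX, Or.inr (Or.inr ⟨h1, hA⟩)⟩
      · by_cases hδ : H.dist u y = G.dist u y
        · exact Or.inr (Or.inr (Or.inr (Or.inl ⟨huX, h1, hA, hδ⟩)))
        · exact Or.inr (Or.inr (Or.inr (Or.inr ⟨huX, h1, hδ⟩)))

end MVAux

theorem stmt_7 {V : Type*} [Fintype V] (G : SimpleGraph V) (hG : G.Connected)
    (x y : V) (hxy : G.Adj x y)
    (hconn : (G.deleteEdges {s(x, y)}).Connected) :
    muO G ≤ 6 * muO (G.deleteEdges {s(x, y)}) := by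
  classical
  set H : SimpleGraph V := G.deleteEdges {s(x, y)} with hHdef
  have hH : H = G.deleteEdges {s(x, y)} := rfl
  have hH' : H = G.deleteEdges {s(y, x)} := by rw [Sym2.eq_swap]
  have hbdd : BddAbove {n | ∃ X' : Set V, IsOuterMVSet H X' ∧ X'.ncard = n} := by
    refine ⟨Fintype.card V, ?_⟩
    rintro n ⟨X', -, rfl⟩
    calc X'.ncard ≤ (Set.univ : Set V).ncard :=
          Set.ncard_le_ncard (Set.subset_univ _) Set.finite_univ
      _ = Fintype.card V := by rw [Set.ncard_univ, Nat.card_eq_fintype_card]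
  have hne : ({n | ∃ X : Set V, IsOuterMVSet G X ∧ X.ncard = n} : Set ℕ).Nonempty :=
    ⟨0, ∅, fun u hu => absurd hu (Set.notMem_empty u), Set.ncard_empty _⟩
  refine csSup_le hne ?_
  rintro n ⟨X, hX, rfl⟩
  have hcov := MVAux.cover (G := G) (H := H) (X := X) hG hxy
  have hpart : ∀ S : Set V, IsOuterMVSet H S → S.ncard ≤ muO H := by
    intro S hS
    exact le_csSup hbdd ⟨S, hS, rfl⟩
  have h1 := hpart _ (MVAux.outer_good hH hG hxy hconn hX)
  have h2 := hpart _ (MVAux.outer_Ba hH hG hxy hconn hX)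
  have h3 := hpart _ (MVAux.outer_Z hH hG hxy hconn hX)
  have h4 := hpart _ (MVAux.outer_Ba hH' hG hxy.symm hconn hX)
  have h5 := hpart _ (MVAux.outer_Z hH' hG hxy.symm hconn hX)
  have hsum : X.ncard ≤ (MVAux.GoodSet G H X x y).ncard + ((MVAux.BaSet G H X x y).ncard +
      ((MVAux.ZSet G H X x y).ncard + ((MVAux.BaSet G H X y x).ncard +
      (MVAux.ZSet G H X y x).ncard))) := by
    calc X.ncard ≤ (MVAux.GoodSet G H X x y ∪ (MVAux.BaSet G H X x y ∪ (MVAux.ZSet G H X x y ∪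
          (MVAux.BaSet G H X y x ∪ MVAux.ZSet G H X y x)))).ncard :=
          Set.ncard_le_ncard hcov (Set.toFinite _)
      _ ≤ _ := by
          refine (Set.ncard_union_le _ _).trans (Nat.add_le_add_left ?_ _)
          refine (Set.ncard_union_le _ _).trans (Nat.add_le_add_left ?_ _)
          refine (Set.ncard_union_le _ _).trans (Nat.add_le_add_left ?_ _)
          exact Set.ncard_union_le _ _
  omega
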